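/- For λ ∈ (0,1), let v(2,2) = 9λ²/((1-λ)(4-λ)²), v(3,2) = 9λ²(19+3λ)/(2(18-7λ)(1-λ)(4-λ)²), v(2,0) = 3λ/((1-λ)(4-λ)), and v(3,0) = 3λ(19+3λ)/(2(4-λ)(1-λ)(18-7λ)). Then 8·v(3,2) − 65·v(2,2) + 57·v(0,2) > 0 where v(0,2) = v(2,0), for all λ ∈ (0,1). -/

import Mathlib

/-- Strict Bellman inequality (ineq1_1 with j = 2):
`8 v(3,2) - 65 v(2,2) + 57 v(0,2) > 0` with `v(0,2) = v(2,0)`, for all `λ ∈ (0,1)`. -/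
theorem bellman_strict_ineq1_1
    (lam : ℝ) (h0 : 0 < lam) (h1 : lam < 1)
    (v20 v30 v22 v32 : ℝ)
    (h20 : v20 = 3 * lam / ((1 - lam) * (4 - lam)))
    (h30 : v30 = 3 * lam * (19 + 3 * lam) / (2 * (4 - lam) * (1 - lam) * (18 - 7 * lam)))
    (h22 : v22 = 9 * lam ^ 2 / ((1 - lam) * (4 - lam) ^ 2))
    (h32 : v32 = 9 * lam ^ 2 * (19 + 3 * lam) / (2 * (18 - 7 * lam) * (1 - lam) * (4 - lam) ^ 2)) :
    8 * v32 - 65 * v22 + 57 * v20 > 0 := by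
  have ha : (0:ℝ) < 1 - lam := by linarith
  have hb : (0:ℝ) < 4 - lam := by linarith
  have hc : (0:ℝ) < 18 - 7 * lam := by linarith
  subst h20 h22 h32
  have key : 8 * (9 * lam ^ 2 * (19 + 3 * lam) / (2 * (18 - 7 * lam) * (1 - lam) * (4 - lam) ^ 2)) -
      65 * (9 * lam ^ 2 / ((1 - lam) * (4 - lam) ^ 2)) +
      57 * (3 * lam / ((1 - lam) * (4 - lam))) =
      lam * ((1 - lam) * (24624 - 10800 * lam)) /
        (2 * (18 - 7 * lam) * (1 - lam) * (4 - lam) ^ 2) := by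
    field_simp [hc.ne', ha.ne', hb.ne', ne_of_gt (by linarith : (0:ℝ) < 18 - lam * 7)]
    ring
  rw [gt_iff_lt, key]
  apply div_pos
  · have : (0:ℝ) < 24624 - 10800 * lam := by linarith
    positivity
  · positivity
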